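/- arXiv:1805.08535 — 2 statements merged into one kernel-verified Lean document; each statement's English description precedes it below -/
import Mathlib

section
/- Let J_k: ℝ^M → ℝ, k = 1,…,N, each be twice continuously differentiable with λ_{k,min} I ≤ ∇²J_k ≤ λ_{k,max} I, λ_{k,min} > 0. Let L be the Laplacian of a connected weighted graph on N nodes, and let P = I_N ⊗ I_M − μη (L ⊗ I_M) with 0 ≤ μη ≤ 2/λ_max(L). Then the map Y = P(X − μ col{∇J_k(x_k)}) on ℝ^{MN} satisfies ‖Y¹ − Y²‖ ≤ γ ‖X¹ − X²‖ with γ = max_k max{|1 − μ λ_{k,min}|, |1 − μ λ_{k,max}|}; in particular the map is a contraction when 0 < μ < min_k 2/λ_{k,max}. -/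
open RealInnerProductSpace

-- key lemma: symmetric op with rayleigh bound has norm bound
lemma symm_norm_le {E : Type*} [NormedAddCommGroup E] [InnerProductSpace ℝ E]
    [FiniteDimensional ℝ E] (T : E →ₗ[ℝ] E) (hT : T.IsSymmetric) {γ : ℝ} (hγ : 0 ≤ γ)
    (hq : ∀ v, |⟪v, T v⟫| ≤ γ * ‖v‖ ^ 2) (v : E) : ‖T v‖ ≤ γ * ‖v‖ := by
  set n := Module.finrank ℝ E with hn
  have hfr : Module.finrank ℝ E = n := rfl
  set B := hT.eigenvectorBasis hfr
  set eig := hT.eigenvalues hfr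
  have heig : ∀ i, |eig i| ≤ γ := by
    intro i
    have h1 : ‖B i‖ = 1 := B.orthonormal.1 i
    have h2 : ⟪B i, T (B i)⟫ = eig i := by
      rw [hT.apply_eigenvectorBasis hfr i]
      rw [real_inner_smul_right, real_inner_self_eq_norm_sq, h1]
      norm_num
      rfl
    have := hq (B i)
    rwa [h2, h1, one_pow, mul_one] at this
  have hrepr : ∀ i, B.repr (T v) i = eig i * B.repr v i :=
    fun i => hT.eigenvectorBasis_apply_self_apply hfr v i
  have hsq : ‖T v‖ ^ 2 ≤ (γ * ‖v‖) ^ 2 := by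
    have e1 : ‖T v‖ ^ 2 = ∑ i, ‖B.repr (T v) i‖ ^ 2 := by
      rw [← B.repr.norm_map (T v), EuclideanSpace.norm_eq, Real.sq_sqrt (by positivity)]
    have e2 : ‖v‖ ^ 2 = ∑ i, ‖B.repr v i‖ ^ 2 := by
      rw [← B.repr.norm_map v, EuclideanSpace.norm_eq, Real.sq_sqrt (by positivity)]
    rw [e1, mul_pow, e2, Finset.mul_sum]
    refine Finset.sum_le_sum fun i _ => ?_
    rw [hrepr i]
    have : ‖eig i * B.repr v i‖ ^ 2 = (eig i) ^ 2 * ‖B.repr v i‖ ^ 2 := by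
      rw [norm_mul, mul_pow, Real.norm_eq_abs, sq_abs]
    rw [this]
    have h3 : (eig i) ^ 2 ≤ γ ^ 2 := by
      have := heig i
      nlinarith [abs_nonneg (eig i), sq_abs (eig i)]
    nlinarith [sq_nonneg (‖B.repr v i‖)]
  calc ‖T v‖ = √(‖T v‖ ^ 2) := by rw [Real.sqrt_sq (norm_nonneg _)]
  _ ≤ √((γ * ‖v‖) ^ 2) := Real.sqrt_le_sqrt hsq
  _ = γ * ‖v‖ := Real.sqrt_sq (by positivity)
open RealInnerProductSpace InnerProductSpace

section
variable {E : Type*} [NormedAddCommGroup E] [InnerProductSpace ℝ E] [CompleteSpace E]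

noncomputable def dualSymmCLM (E : Type*) [NormedAddCommGroup E] [InnerProductSpace ℝ E]
    [CompleteSpace E] : (E →L[ℝ] ℝ) →L[ℝ] E :=
  LinearMap.mkContinuous
    { toFun := fun ℓ => (toDual ℝ E).symm ℓ
      map_add' := fun ℓ₁ ℓ₂ => by simp
      map_smul' := fun r ℓ => by
        have := (toDual ℝ E).symm.map_smul r ℓ
        simpa using this }
    1 (fun ℓ => by simp)

lemma dualSymmCLM_inner (ℓ : E →L[ℝ] ℝ) (u : E) : ⟪dualSymmCLM E ℓ, u⟫ = ℓ u := by
  simp only [dualSymmCLM, LinearMap.mkContinuous_apply, LinearMap.coe_mk, AddHom.coe_mk]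
  exact toDual_symm_apply

lemma hasFDerivAt_gradient (f : E → ℝ) (hf : ContDiff ℝ 2 f) (x : E) :
    HasFDerivAt (gradient f) ((dualSymmCLM E).comp (fderiv ℝ (fderiv ℝ f) x)) x := by
  have h1 : ContDiff ℝ 1 (fderiv ℝ f) := hf.fderiv_right (le_refl 2)
  have h2 : HasFDerivAt (fderiv ℝ f) (fderiv ℝ (fderiv ℝ f) x) x :=
    (h1.differentiable one_ne_zero x).hasFDerivAt
  have h3 : gradient f = fun y => dualSymmCLM E (fderiv ℝ f y) := by
    funext y
    simp only [dualSymmCLM, LinearMap.mkContinuous_apply, LinearMap.coe_mk, AddHom.coe_mk]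
    rfl
  rw [h3]
  exact ((dualSymmCLM E).hasFDerivAt).comp x h2

lemma grad_symm (f : E → ℝ) (hf : ContDiff ℝ 2 f) (x : E) (u w : E) :
    ⟪fderiv ℝ (gradient f) x u, w⟫ = ⟪u, fderiv ℝ (gradient f) x w⟫ := by
  rw [(hasFDerivAt_gradient f hf x).fderiv]
  have hsymm := (hf.contDiffAt (x := x)).isSymmSndFDerivAt (by simp)
  simp only [ContinuousLinearMap.coe_comp', Function.comp_apply]
  rw [dualSymmCLM_inner, real_inner_comm, dualSymmCLM_inner]
  exact hsymm.eq u w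

end

section
variable {E : Type*} [NormedAddCommGroup E] [InnerProductSpace ℝ E] [FiniteDimensional ℝ E]

lemma block_lip (f : E → ℝ) (hf : ContDiff ℝ 2 f) (a b μ : ℝ)
    (hlo : ∀ x v, a * ‖v‖ ^ 2 ≤ ⟪v, fderiv ℝ (gradient f) x v⟫)
    (hhi : ∀ x v, ⟪v, fderiv ℝ (gradient f) x v⟫ ≤ b * ‖v‖ ^ 2) (x y : E) :
    ‖(x - μ • gradient f x) - (y - μ • gradient f y)‖
      ≤ max |1 - μ * a| |1 - μ * b| * ‖x - y‖ := by
  set γ₀ := max |1 - μ * a| |1 - μ * b| with hγ₀def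
  have hγ₀ : 0 ≤ γ₀ := le_trans (abs_nonneg _) (le_max_left _ _)
  have hdg : ∀ z : E, DifferentiableAt ℝ (gradient f) z :=
    fun z => (hasFDerivAt_gradient f hf z).differentiableAt
  have hder : ∀ z : E, HasFDerivAt (fun w : E => w - μ • gradient f w)
      (ContinuousLinearMap.id ℝ E - μ • fderiv ℝ (gradient f) z) z := by
    intro z
    exact (hasFDerivAt_id z).sub ((hdg z).hasFDerivAt.const_smul μ)
  have hbound : ∀ z : E, ‖fderiv ℝ (fun w : E => w - μ • gradient f w) z‖ ≤ γ₀ := by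
    intro z
    rw [(hder z).fderiv]
    refine ContinuousLinearMap.opNorm_le_bound _ hγ₀ fun v => ?_
    have hTsymm : (ContinuousLinearMap.id ℝ E - μ • fderiv ℝ (gradient f) z :
        E →L[ℝ] E).toLinearMap.IsSymmetric := by
      intro p q
      simp only [ContinuousLinearMap.coe_coe, ContinuousLinearMap.sub_apply,
        ContinuousLinearMap.smul_apply, ContinuousLinearMap.id_apply,
        inner_sub_left, inner_sub_right, real_inner_smul_left, real_inner_smul_right]
      rw [grad_symm f hf z p q]
    have hq : ∀ v : E, |⟪v, (ContinuousLinearMap.id ℝ E - μ • fderiv ℝ (gradient f) z :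
        E →L[ℝ] E).toLinearMap v⟫| ≤ γ₀ * ‖v‖ ^ 2 := by
      intro v
      have hv : ⟪v, (ContinuousLinearMap.id ℝ E - μ • fderiv ℝ (gradient f) z :
          E →L[ℝ] E).toLinearMap v⟫
          = ‖v‖ ^ 2 - μ * ⟪v, fderiv ℝ (gradient f) z v⟫ := by
        simp only [ContinuousLinearMap.coe_coe, ContinuousLinearMap.sub_apply,
          ContinuousLinearMap.smul_apply, ContinuousLinearMap.id_apply,
          inner_sub_right, real_inner_smul_right, real_inner_self_eq_norm_sq]
      rw [hv]
      have h1 := hlo z v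
      have h2 := hhi z v
      have hma := mul_le_mul_of_nonneg_right (le_max_left |1 - μ * a| |1 - μ * b|)
        (sq_nonneg ‖v‖)
      have hmb := mul_le_mul_of_nonneg_right (le_max_right |1 - μ * a| |1 - μ * b|)
        (sq_nonneg ‖v‖)
      have haa := le_abs_self (1 - μ * a)
      have hab := le_abs_self (1 - μ * b)
      have hna := neg_abs_le (1 - μ * a)
      have hnb := neg_abs_le (1 - μ * b)
      rw [abs_le]
      rcases le_total 0 μ with hμ | hμ
      · constructor
        · nlinarith [mul_le_mul_of_nonneg_left h2 hμ]
        · nlinarith [mul_le_mul_of_nonneg_left h1 hμ]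
      · constructor
        · nlinarith [mul_le_mul_of_nonpos_left h1 hμ]
        · nlinarith [mul_le_mul_of_nonpos_left h2 hμ]
    have := symm_norm_le _ hTsymm hγ₀ hq v
    simpa using this
  have := Convex.norm_image_sub_le_of_norm_fderiv_le
    (fun z _ => ((hder z).differentiableAt)) (fun z _ => hbound z)
    convex_univ (Set.mem_univ y) (Set.mem_univ x)
  simpa using this
end
open Matrix RealInnerProductSpace

lemma dot_shift {N : ℕ} (A : Matrix (Fin N) (Fin N) ℝ) (hA : A.IsSymm)
    (v x : Fin N → ℝ) : (A *ᵥ v) ⬝ᵥ x = v ⬝ᵥ (A *ᵥ x) := by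
  simp only [dotProduct, mulVec, Finset.sum_mul, Finset.mul_sum]
  rw [Finset.sum_comm]
  refine Finset.sum_congr rfl fun k _ => Finset.sum_congr rfl fun l _ => ?_
  rw [hA.apply k l]
  ring

lemma key_quad {N : ℕ} (L : Matrix (Fin N) (Fin N) ℝ) (hLsymm : L.IsSymm)
    (hLpsd : L.PosSemidef) (c : ℝ) (hc : 0 ≤ c)
    (hμη : ((2 : ℝ) • (1 : Matrix (Fin N) (Fin N) ℝ) - c • L).PosSemidef)
    (v : Fin N → ℝ) :
    c ^ 2 * ((L *ᵥ v) ⬝ᵥ (L *ᵥ v)) ≤ 2 * c * (v ⬝ᵥ (L *ᵥ v)) := by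
  obtain ⟨S, hSpsd, hSS⟩ : ∃ S : Matrix (Fin N) (Fin N) ℝ, S.PosSemidef ∧ S * S = L := by
    open scoped MatrixOrder in
    exact ⟨CFC.sqrt L, (CFC.sqrt_nonneg L).posSemidef, CFC.sqrt_mul_sqrt_self L hLpsd.nonneg⟩
  have hSsymm : S.IsSymm := by
    have := hSpsd.1
    rwa [Matrix.IsHermitian, conjTranspose_eq_transpose_of_trivial] at this
  set q := S *ᵥ v with hq
  have h0 : 0 ≤ star q ⬝ᵥ (((2 : ℝ) • 1 - c • L) *ᵥ q) := hμη.dotProduct_mulVec_nonneg q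
  rw [star_trivial] at h0
  have hqq : q ⬝ᵥ q = v ⬝ᵥ (L *ᵥ v) := by
    rw [hq, dot_shift S hSsymm, mulVec_mulVec, hSS]
  have hqLq : q ⬝ᵥ (L *ᵥ q) = v ⬝ᵥ ((L * L) *ᵥ v) := by
    have hSLS : S * L * S = L * L := by
      rw [← hSS]; simp only [Matrix.mul_assoc]
    rw [hq, mulVec_mulVec, dot_shift S hSsymm, mulVec_mulVec, ← Matrix.mul_assoc, hSLS]
  have hLL : (L *ᵥ v) ⬝ᵥ (L *ᵥ v) = v ⬝ᵥ ((L * L) *ᵥ v) := by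
    rw [dot_shift L hLsymm, mulVec_mulVec]
  have hexp : q ⬝ᵥ (((2 : ℝ) • 1 - c • L) *ᵥ q)
      = 2 * (q ⬝ᵥ q) - c * (q ⬝ᵥ (L *ᵥ q)) := by
    rw [sub_mulVec, dotProduct_sub, smul_mulVec, smul_mulVec, one_mulVec,
      dotProduct_smul, dotProduct_smul]
    simp [smul_eq_mul]
  rw [hexp, hqq, hqLq] at h0
  rw [hLL]
  nlinarith [mul_nonneg hc h0]

lemma sum_smul_apply {N M : ℕ} (L : Matrix (Fin N) (Fin N) ℝ)
    (w : PiLp 2 fun _ : Fin N => EuclideanSpace ℝ (Fin M)) (k : Fin N) (m : Fin M) :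
    (∑ l, L k l • w l) m = ∑ l, L k l * w l m := by
  induction (Finset.univ : Finset (Fin N)) using Finset.induction with
  | empty => simp
  | insert _ _ h ih => rw [Finset.sum_insert h, Finset.sum_insert h, ← ih]; rfl

lemma P_contract {N M : ℕ} (L : Matrix (Fin N) (Fin N) ℝ) (hLsymm : L.IsSymm)
    (hLpsd : L.PosSemidef) (c : ℝ) (hc : 0 ≤ c)
    (hμη : ((2 : ℝ) • (1 : Matrix (Fin N) (Fin N) ℝ) - c • L).PosSemidef)
    (w z : PiLp 2 fun _ : Fin N => EuclideanSpace ℝ (Fin M))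
    (hz : ∀ k, z k = w k - c • ∑ l, L k l • w l) : ‖z‖ ≤ ‖w‖ := by
  set u : PiLp 2 (fun _ : Fin N => EuclideanSpace ℝ (Fin M)) :=
    WithLp.toLp 2 (fun k => ∑ l, L k l • w l) with hu
  have hzz : z = w - c • u := by
    refine PiLp.ext fun k => ?_
    exact hz k
  have hinner : ⟪w, u⟫ = ∑ m : Fin M, (fun l => w l m) ⬝ᵥ (L *ᵥ fun l => w l m) := by
    rw [PiLp.inner_apply]
    simp only [PiLp.inner_apply, RCLike.inner_apply, conj_trivial, hu]
    rw [Finset.sum_comm]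
    refine Finset.sum_congr rfl fun m _ => ?_
    simp only [dotProduct, mulVec]
    refine Finset.sum_congr rfl fun k _ => ?_
    rw [sum_smul_apply]
    ring
  have hnu : ‖u‖ ^ 2 = ∑ m : Fin M, (L *ᵥ fun l => w l m) ⬝ᵥ (L *ᵥ fun l => w l m) := by
    rw [← real_inner_self_eq_norm_sq, PiLp.inner_apply]
    simp only [PiLp.inner_apply, RCLike.inner_apply, conj_trivial, hu]
    rw [Finset.sum_comm]
    refine Finset.sum_congr rfl fun m _ => ?_
    simp only [dotProduct, mulVec]
    refine Finset.sum_congr rfl fun k _ => ?_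
    rw [sum_smul_apply]
  have hkey : c ^ 2 * ‖u‖ ^ 2 ≤ 2 * c * ⟪w, u⟫ := by
    rw [hinner, hnu, Finset.mul_sum, Finset.mul_sum]
    exact Finset.sum_le_sum fun m _ =>
      key_quad L hLsymm hLpsd c hc hμη (fun l => w l m)
  have hsq : ‖z‖ ^ 2 ≤ ‖w‖ ^ 2 := by
    rw [hzz, norm_sub_sq_real, real_inner_smul_right, norm_smul, Real.norm_eq_abs,
      mul_pow, sq_abs]
    nlinarith
  calc ‖z‖ = √(‖z‖ ^ 2) := by rw [Real.sqrt_sq (norm_nonneg _)]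
  _ ≤ √(‖w‖ ^ 2) := Real.sqrt_le_sqrt hsq
  _ = ‖w‖ := Real.sqrt_sq (norm_nonneg _)
open Matrix RealInnerProductSpace

theorem stmt5 {N M : ℕ} (J : Fin N → EuclideanSpace ℝ (Fin M) → ℝ)
    (hJ : ∀ k, ContDiff ℝ 2 (J k))
    (lmin lmax : Fin N → ℝ) (h0 : ∀ k, 0 < lmin k) (hle : ∀ k, lmin k ≤ lmax k)
    (hlo : ∀ k x v, lmin k * ‖v‖ ^ 2 ≤ ⟪v, fderiv ℝ (gradient (J k)) x v⟫)
    (hhi : ∀ k x v, ⟪v, fderiv ℝ (gradient (J k)) x v⟫ ≤ lmax k * ‖v‖ ^ 2)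
    (L : Matrix (Fin N) (Fin N) ℝ) (hLsymm : L.IsSymm) (hLpsd : L.PosSemidef)
    (μ η : ℝ) (hμη0 : 0 ≤ μ * η)
    (hμη : ((2 : ℝ) • (1 : Matrix (Fin N) (Fin N) ℝ) - (μ * η) • L).PosSemidef)
    (γ : ℝ) (hγ : γ = ⨆ k, max |1 - μ * lmin k| |1 - μ * lmax k|)
    (T : (PiLp 2 fun _ : Fin N => EuclideanSpace ℝ (Fin M)) →
      PiLp 2 fun _ : Fin N => EuclideanSpace ℝ (Fin M))
    (hT : ∀ X k, T X k = (X k - μ • gradient (J k) (X k))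
        - (μ * η) • ∑ l, L k l • (X l - μ • gradient (J l) (X l))) :
    (∀ X1 X2, ‖T X1 - T X2‖ ≤ γ * ‖X1 - X2‖) ∧
      ((0 < μ ∧ ∀ k, μ < 2 / lmax k) → γ < 1) := by
  have hγk : ∀ k : Fin N, max |1 - μ * lmin k| |1 - μ * lmax k| ≤ γ := by
    intro k
    rw [hγ]
    exact le_ciSup (f := fun k : Fin N => max |1 - μ * lmin k| |1 - μ * lmax k|)
      (Set.Finite.bddAbove (Set.finite_range _)) k
  have hγ0 : 0 ≤ γ := by
    rcases Nat.eq_zero_or_pos N with h | h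
    · subst h
      rw [hγ, Real.iSup_of_isEmpty]
    · exact le_trans (le_trans (abs_nonneg _) (le_max_left _ _)) (hγk ⟨0, h⟩)
  constructor
  · intro X1 X2
    have hw : ∃ w : PiLp 2 (fun _ : Fin N => EuclideanSpace ℝ (Fin M)), ∀ k,
        w k = (X1 k - μ • gradient (J k) (X1 k)) - (X2 k - μ • gradient (J k) (X2 k)) :=
      ⟨WithLp.toLp 2 (fun k => (X1 k - μ • gradient (J k) (X1 k)) - (X2 k - μ • gradient (J k) (X2 k))),
        fun k => rfl⟩
    obtain ⟨w, hwk⟩ := hw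
    have hTz : ∀ k, (T X1 - T X2) k = w k - (μ * η) • ∑ l, L k l • w l := by
      intro k
      have h1 : (T X1 - T X2) k = T X1 k - T X2 k := rfl
      rw [h1, hT X1 k, hT X2 k]
      have h2 : ∑ l, L k l • w l
          = (∑ l, L k l • (X1 l - μ • gradient (J l) (X1 l)))
            - ∑ l, L k l • (X2 l - μ • gradient (J l) (X2 l)) := by
        rw [← Finset.sum_sub_distrib]
        exact Finset.sum_congr rfl fun l _ => by rw [hwk, smul_sub]
      rw [h2, smul_sub, hwk]
      abel
    have hP : ‖T X1 - T X2‖ ≤ ‖w‖ :=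
      P_contract L hLsymm hLpsd (μ * η) hμη0 hμη w (T X1 - T X2) hTz
    have hblock : ∀ k, ‖w k‖ ≤ γ * ‖X1 k - X2 k‖ := by
      intro k
      rw [hwk k]
      refine le_trans (block_lip (J k) (hJ k) (lmin k) (lmax k) μ (hlo k) (hhi k)
        (X1 k) (X2 k)) ?_
      exact mul_le_mul_of_nonneg_right (hγk k) (norm_nonneg _)
    have hw2 : ‖w‖ ≤ γ * ‖X1 - X2‖ := by
      have hsq : ‖w‖ ^ 2 ≤ (γ * ‖X1 - X2‖) ^ 2 := by
        rw [PiLp.norm_sq_eq_of_L2, mul_pow, PiLp.norm_sq_eq_of_L2, Finset.mul_sum]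
        refine Finset.sum_le_sum fun k _ => ?_
        have h3 : (X1 - X2) k = X1 k - X2 k := rfl
        rw [h3, ← mul_pow]
        have := hblock k
        nlinarith [norm_nonneg (w k), norm_nonneg (X1 k - X2 k)]
      calc ‖w‖ = √(‖w‖ ^ 2) := by rw [Real.sqrt_sq (norm_nonneg _)]
      _ ≤ √((γ * ‖X1 - X2‖) ^ 2) := Real.sqrt_le_sqrt hsq
      _ = γ * ‖X1 - X2‖ := Real.sqrt_sq (by positivity)
    exact le_trans hP hw2
  · rintro ⟨hμpos, hμlt⟩
    have hlt : ∀ k : Fin N, max |1 - μ * lmin k| |1 - μ * lmax k| < 1 := by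
      intro k
      have hlmax : 0 < lmax k := lt_of_lt_of_le (h0 k) (hle k)
      have h2k : μ * lmax k < 2 := by
        have := hμlt k
        rw [lt_div_iff₀ hlmax] at this
        linarith
      have hmin_pos : 0 < μ * lmin k := mul_pos hμpos (h0 k)
      have hmono : μ * lmin k ≤ μ * lmax k :=
        mul_le_mul_of_nonneg_left (hle k) hμpos.le
      refine max_lt (abs_lt.2 ⟨by linarith, by linarith⟩)
        (abs_lt.2 ⟨by linarith, by linarith⟩)
    rcases Nat.eq_zero_or_pos N with h | h
    · subst h
      rw [hγ, Real.iSup_of_isEmpty]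
      norm_num
    · haveI : Nonempty (Fin N) := ⟨⟨0, h⟩⟩
      obtain ⟨k0, hk0⟩ :=
        Finite.exists_max fun k : Fin N => max |1 - μ * lmin k| |1 - μ * lmax k|
      rw [hγ]
      exact lt_of_le_of_lt (ciSup_le hk0) (hlt k0)
end

section
/- Let L be the Laplacian of a connected graph on N nodes with orthonormal eigenbasis V = [v_1, V_R], v_1 = 𝟙/√N, and eigenvalues 0 = λ_1 < λ_2 ≤ … ≤ λ_N. Let H = diag{H_1,…,H_N} ⪰ λ_min I with λ_min > 0 (each H_k symmetric M×M), η ≥ 0, and W_η = (H + η L⊗I_M)^{-1} H W for W ∈ ℝ^{MN}. Then the transformed difference satisfies (V_R^T ⊗ I_M)(W_η − W) = (K − I)(V_R^T ⊗ I_M) W, where K = I − η G (Λ_o ⊗ I_M), G = (Q22 − Q12^T Q11^{-1} Q12)^{-1}, Q11 = (v_1^T⊗I)H(v_1⊗I), Q12 = (v_1^T⊗I)H(V_R⊗I), Q22 = (V_R^T⊗I)H(V_R⊗I) + η Λ_o⊗I, and Λ_o = diag{λ_2,…,λ_N}. In particular, if (V_R^T ⊗ I_M) W = 0 then W_η = W.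 -/
open Matrix Kronecker

private lemma aux_dot {M : ℕ} (Hk : Matrix (Fin M) (Fin M) ℝ) (lmin : ℝ)
    (h : (Hk - lmin • 1).PosSemidef) (y : Fin M → ℝ) :
    lmin * (y ⬝ᵥ y) ≤ y ⬝ᵥ (Hk *ᵥ y) := by
  have := h.dotProduct_mulVec_nonneg y
  simp only [star_trivial, Matrix.sub_mulVec, dotProduct_sub, Matrix.smul_mulVec,
    Matrix.one_mulVec, dotProduct_smul, smul_eq_mul, sub_nonneg] at this
  exact this

private lemma aux_conj {n m : Type*} [Fintype n] [Fintype m] [DecidableEq n] [DecidableEq m]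
    {A : Matrix n n ℝ} (hA : A.PosDef) (B : Matrix n m ℝ)
    (hB : ∀ x : m → ℝ, B *ᵥ x = 0 → x = 0) (hAt : Aᵀ = A) : (Bᵀ * A * B).PosDef := by
  refine Matrix.PosDef.of_dotProduct_mulVec_pos ?_ ?_
  · rw [Matrix.IsHermitian, Matrix.conjTranspose_eq_transpose_of_trivial,
      Matrix.transpose_mul, Matrix.transpose_mul, Matrix.transpose_transpose, hAt,
      Matrix.mul_assoc]
  · intro x hx
    rw [star_trivial]
    have h1 : (Bᵀ * A * B) *ᵥ x = Bᵀ *ᵥ (A *ᵥ (B *ᵥ x)) := by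
      rw [Matrix.mulVec_mulVec, Matrix.mulVec_mulVec]
    rw [h1, Matrix.dotProduct_mulVec, Matrix.vecMul_transpose]
    have := hA.dotProduct_mulVec_pos (x := B *ᵥ x) (fun h => hx (hB x h))
    simpa using this

theorem stmt18 {N M : ℕ}
    (L : Matrix (Fin (N + 1)) (Fin (N + 1)) ℝ) (hLsymm : L.IsSymm) (hLpsd : L.PosSemidef)
    (v1 : Fin (N + 1) → ℝ) (hv1 : v1 = fun _ => 1 / Real.sqrt (N + 1))
    (VR : Matrix (Fin (N + 1)) (Fin N) ℝ)
    (hVRorth : VRᵀ * VR = 1)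
    (hVRv1 : VRᵀ *ᵥ v1 = 0)
    (hcomplete : Matrix.vecMulVec v1 v1 + VR * VRᵀ = 1)
    (lam : Fin N → ℝ) (hlam : ∀ i, 0 < lam i)
    (hLv1 : L *ᵥ v1 = 0)
    (hLVR : L * VR = VR * Matrix.diagonal lam)
    (H : Fin (N + 1) → Matrix (Fin M) (Fin M) ℝ)
    (hHsymm : ∀ k, (H k).IsSymm)
    (lmin : ℝ) (hlmin : 0 < lmin)
    (hHlo : ∀ k, (H k - lmin • 1).PosSemidef)
    (η : ℝ) (hη : 0 ≤ η)
    (W : Fin (N + 1) × Fin M → ℝ) :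
    let ℋ : Matrix (Fin (N + 1) × Fin M) (Fin (N + 1) × Fin M) ℝ :=
      Matrix.of fun p q => if p.1 = q.1 then H p.1 p.2 q.2 else 0
    let ℒ := L ⊗ₖ (1 : Matrix (Fin M) (Fin M) ℝ)
    let Wη := (ℋ + η • ℒ)⁻¹ *ᵥ (ℋ *ᵥ W)
    let C1 : Matrix (Fin (N + 1) × Fin M) (Fin M) ℝ :=
      Matrix.of fun p j => v1 p.1 * (1 : Matrix (Fin M) (Fin M) ℝ) p.2 j
    let CR := VR ⊗ₖ (1 : Matrix (Fin M) (Fin M) ℝ)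
    let Q11 := C1ᵀ * ℋ * C1
    let Q12 := C1ᵀ * ℋ * CR
    let Q22 := CRᵀ * ℋ * CR + η • (Matrix.diagonal lam ⊗ₖ (1 : Matrix (Fin M) (Fin M) ℝ))
    let G := (Q22 - Q12ᵀ * Q11⁻¹ * Q12)⁻¹
    let K := 1 - η • (G * (Matrix.diagonal lam ⊗ₖ (1 : Matrix (Fin M) (Fin M) ℝ)))
    (CRᵀ *ᵥ (Wη - W) = (K - 1) *ᵥ (CRᵀ *ᵥ W)) ∧ (CRᵀ *ᵥ W = 0 → Wη = W) := by
  intro ℋ ℒ Wη C1 CR Q11 Q12 Q22 G K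
  have hHdef : ℋ = Matrix.of fun p q => if p.1 = q.1 then H p.1 p.2 q.2 else 0 := rfl
  have hLdef : ℒ = L ⊗ₖ (1 : Matrix (Fin M) (Fin M) ℝ) := rfl
  have hC1def : C1 = Matrix.of fun p j => v1 p.1 * (1 : Matrix (Fin M) (Fin M) ℝ) p.2 j := rfl
  have hCRdef : CR = VR ⊗ₖ (1 : Matrix (Fin M) (Fin M) ℝ) := rfl
  set D := Matrix.diagonal lam ⊗ₖ (1 : Matrix (Fin M) (Fin M) ℝ) with hDdef
  set A := ℋ + η • ℒ with hAdef
  have hWηdef : Wη = A⁻¹ *ᵥ (ℋ *ᵥ W) := rfl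
  set X := A⁻¹ with hXdef
  -- basic products
  have hsum : ∀ r, ∑ x : Fin (N+1), v1 x * VR x r = 0 := by
    intro r
    have := congrFun hVRv1 r
    simpa [Matrix.mulVec, dotProduct, mul_comm] using this
  have hnorm : ∑ k : Fin (N+1), v1 k * v1 k = 1 := by
    subst hv1
    simp only [div_mul_div_comm, one_mul, Real.mul_self_sqrt (by positivity : (0:ℝ) ≤ N+1),
      Finset.sum_const, Finset.card_univ, Fintype.card_fin, nsmul_eq_mul]
    push_cast
    field_simp
  have hC1C1 : C1ᵀ * C1 = 1 := by
    ext i j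
    simp only [Matrix.mul_apply, Fintype.sum_prod_type, hC1def, Matrix.transpose_apply,
      Matrix.of_apply, Matrix.one_apply, mul_ite, mul_one, mul_zero, ite_mul, zero_mul]
    simp [Finset.sum_ite_eq, apply_ite, hnorm, eq_comm]
  have hC1CR : C1ᵀ * CR = 0 := by
    ext i q
    simp only [Matrix.mul_apply, Fintype.sum_prod_type, hC1def, hCRdef, Matrix.transpose_apply,
      Matrix.of_apply, Matrix.kroneckerMap_apply, Matrix.one_apply, mul_ite, mul_one, mul_zero,
      ite_mul, zero_mul]
    simp only [Finset.sum_ite_eq', Finset.mem_univ, if_true]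
    split_ifs with h
    · simp [hsum]
    · simp
  have hCRC1 : CRᵀ * C1 = 0 := by
    have h := congrArg Matrix.transpose hC1CR
    simpa [Matrix.transpose_mul] using h
  have hCRCR : CRᵀ * CR = 1 := by
    rw [hCRdef, ← Matrix.kroneckerMap_transpose, Matrix.transpose_one,
      ← Matrix.mul_kronecker_mul, hVRorth, Matrix.one_mul, Matrix.one_kronecker_one]
  have hLCR : ℒ * CR = CR * D := by
    rw [hLdef, hCRdef, hDdef, ← Matrix.mul_kronecker_mul, ← Matrix.mul_kronecker_mul, hLVR,
      Matrix.one_mul]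
  have hLC1 : ℒ * C1 = 0 := by
    ext p j
    simp only [hLdef, hC1def, Matrix.mul_apply, Fintype.sum_prod_type, Matrix.of_apply,
      Matrix.kroneckerMap_apply, Matrix.one_apply, mul_ite, mul_one, mul_zero, ite_mul, zero_mul]
    simp only [Finset.sum_ite_eq', Finset.mem_univ, if_true]
    split_ifs with h
    · have := congrFun hLv1 p.1
      simpa [Matrix.mulVec, dotProduct] using this
    · simp
  have hcompl : C1 * C1ᵀ + CR * CRᵀ = 1 := by
    ext p q
    have hc := congrFun (congrFun hcomplete p.1) q.1
    simp only [Matrix.add_apply, Matrix.vecMulVec_apply, Matrix.one_apply] at hc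
    simp only [hC1def, hCRdef, Matrix.add_apply, Matrix.mul_apply, Fintype.sum_prod_type,
      Matrix.of_apply, Matrix.transpose_apply, Matrix.kroneckerMap_apply, Matrix.one_apply,
      mul_ite, mul_one, mul_zero, ite_mul, zero_mul]
    simp only [Finset.sum_ite_eq', Finset.sum_ite_eq, Finset.mem_univ, if_true]
    rw [Matrix.mul_apply] at hc
    simp only [Matrix.transpose_apply] at hc
    by_cases h2 : p.2 = q.2
    · simpa [h2, Prod.ext_iff] using hc
    · simp [h2, Prod.ext_iff]
  -- symmetry facts
  have hℋsym : ℋ.IsHermitian := by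
    rw [Matrix.IsHermitian, Matrix.conjTranspose_eq_transpose_of_trivial]
    ext p q
    simp only [hHdef, Matrix.transpose_apply, Matrix.of_apply]
    by_cases h : p.1 = q.1
    · rw [if_pos h.symm, if_pos h, h]
      exact (hHsymm q.1).apply p.2 q.2
    · rw [if_neg (fun hh => h hh.symm), if_neg h]
  have hℋtr : ℋᵀ = ℋ := by
    have := hℋsym.eq
    rwa [Matrix.conjTranspose_eq_transpose_of_trivial] at this
  have hℒtr : ℒᵀ = ℒ := by
    rw [hLdef, ← Matrix.kroneckerMap_transpose]
    rw [hLsymm.eq, Matrix.transpose_one]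
  have hAtr : Aᵀ = A := by
    rw [hAdef, Matrix.transpose_add, Matrix.transpose_smul, hℋtr, hℒtr]
  -- positivity
  have hkey : ∀ x : Fin (N+1) × Fin M → ℝ,
      x ⬝ᵥ (ℋ *ᵥ x) = ∑ k, (fun m => x (k,m)) ⬝ᵥ (H k *ᵥ fun m => x (k,m)) := by
    intro x
    simp only [dotProduct, Matrix.mulVec, Fintype.sum_prod_type, hHdef, Matrix.of_apply,
      dotProduct]
    refine Finset.sum_congr rfl fun k _ => Finset.sum_congr rfl fun m _ => ?_
    congr 1
    simp [Fintype.sum_prod_type, ite_mul, Finset.sum_ite_eq, zero_mul]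
  have hℋpd : ℋ.PosDef := by
    refine Matrix.PosDef.of_dotProduct_mulVec_pos hℋsym fun x hx => ?_
    rw [star_trivial, hkey]
    have h1 : ∀ k, lmin * ((fun m => x (k,m)) ⬝ᵥ (fun m => x (k,m)))
        ≤ (fun m => x (k,m)) ⬝ᵥ (H k *ᵥ fun m => x (k,m)) :=
      fun k => aux_dot (H k) lmin (hHlo k) _
    have h2 : lmin * (x ⬝ᵥ x) ≤ ∑ k, (fun m => x (k,m)) ⬝ᵥ (H k *ᵥ fun m => x (k,m)) := by
      calc lmin * (x ⬝ᵥ x) = ∑ k, lmin * ((fun m => x (k,m)) ⬝ᵥ (fun m => x (k,m))) := by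
            simp only [dotProduct, Fintype.sum_prod_type, Finset.mul_sum]
        _ ≤ _ := Finset.sum_le_sum fun k _ => h1 k
    have h3 : 0 < x ⬝ᵥ x := by
      rcases lt_or_eq_of_le (Finset.sum_nonneg fun i _ => mul_self_nonneg (x i)) with h | h
      · exact h
      · exact absurd ((dotProduct_self_eq_zero).mp h.symm) hx
    calc (0:ℝ) < lmin * (x ⬝ᵥ x) := by positivity
      _ ≤ _ := h2
  have hDdiag : D = Matrix.diagonal (fun p : Fin N × Fin M => lam p.1) := by
    rw [hDdef, show (1 : Matrix (Fin M) (Fin M) ℝ) = Matrix.diagonal (fun _ => 1) by simp,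
      Matrix.diagonal_kronecker_diagonal]
    simp
  have hDpsd : D.PosSemidef := by
    rw [hDdiag]
    exact Matrix.PosSemidef.diagonal fun p => (hlam p.1).le
  have hLfact : ℒ = CR * D * CRᵀ := by
    calc ℒ = ℒ * (C1 * C1ᵀ + CR * CRᵀ) := by rw [hcompl, Matrix.mul_one]
      _ = ℒ * C1 * C1ᵀ + ℒ * CR * CRᵀ := by
          rw [Matrix.mul_add, Matrix.mul_assoc, Matrix.mul_assoc]
      _ = CR * D * CRᵀ := by rw [hLC1, hLCR, Matrix.zero_mul, zero_add]
  have hℒpsd : ℒ.PosSemidef := by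
    rw [hLfact]
    have := hDpsd.mul_mul_conjTranspose_same CR
    rwa [Matrix.conjTranspose_eq_transpose_of_trivial] at this
  have hηDpsd : (η • D).PosSemidef := by
    have : η • D = Matrix.diagonal (fun p : Fin N × Fin M => η * lam p.1) := by
      rw [hDdiag]
      ext p q
      by_cases h : p = q <;> simp [Matrix.diagonal_apply, h]
    rw [this]
    exact Matrix.PosSemidef.diagonal fun p => mul_nonneg hη (hlam p.1).le
  have hηℒpsd : (η • ℒ).PosSemidef := by
    have heq : CR * (η • D) * CRᵀ = η • ℒ := by
      rw [hLfact, Matrix.mul_smul, Matrix.smul_mul]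
    rw [← heq]
    have := hηDpsd.mul_mul_conjTranspose_same CR
    rwa [Matrix.conjTranspose_eq_transpose_of_trivial] at this
  have hApd : A.PosDef := by
    rw [hAdef]
    exact hℋpd.add_posSemidef hηℒpsd
  have hAdet : IsUnit A.det := hApd.det_pos.ne'.isUnit
  have hAX : A * X = 1 := Matrix.mul_nonsing_inv A hAdet
  have hXA : X * A = 1 := Matrix.nonsing_inv_mul A hAdet
  -- Q definitions in associated form
  have hQ11' : Q11 = C1ᵀ * (ℋ * C1) := Matrix.mul_assoc _ _ _
  have hQ12' : Q12 = C1ᵀ * (ℋ * CR) := Matrix.mul_assoc _ _ _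
  have hQ22' : Q22 = CRᵀ * (ℋ * CR) + η • D := by
    rw [show Q22 = CRᵀ * ℋ * CR + η • D from rfl, Matrix.mul_assoc]
  have hQ12tr : Q12ᵀ = CRᵀ * (ℋ * C1) := by
    rw [show Q12 = C1ᵀ * ℋ * CR from rfl, Matrix.transpose_mul, Matrix.transpose_mul,
      Matrix.transpose_transpose, hℋtr]
  -- A-products
  have hAC1 : A * C1 = ℋ * C1 := by
    rw [hAdef, Matrix.add_mul, Matrix.smul_mul, hLC1, smul_zero, add_zero]
  have hACR : A * CR = ℋ * CR + η • (CR * D) := by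
    rw [hAdef, Matrix.add_mul, Matrix.smul_mul, hLCR]
  have hC1CRD : C1ᵀ * (CR * D) = 0 := by rw [← Matrix.mul_assoc, hC1CR, Matrix.zero_mul]
  have hCRCRD : CRᵀ * (CR * D) = D := by rw [← Matrix.mul_assoc, hCRCR, Matrix.one_mul]
  have hQ11A : C1ᵀ * (A * C1) = Q11 := by rw [hAC1, hQ11']
  have hQ12A : C1ᵀ * (A * CR) = Q12 := by
    rw [hACR, Matrix.mul_add, Matrix.mul_smul, hC1CRD, smul_zero, add_zero, hQ12']
  have hQ21A : CRᵀ * (A * C1) = Q12ᵀ := by rw [hAC1, hQ12tr]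
  have hQ22A : CRᵀ * (A * CR) = Q22 := by
    rw [hACR, Matrix.mul_add, Matrix.mul_smul, hCRCRD, hQ22']
  -- block equations
  have h0A : A * (X * CR) = CR := by rw [← Matrix.mul_assoc, hAX, Matrix.one_mul]
  have e1 : Q11 * (C1ᵀ * (X * CR)) + Q12 * (CRᵀ * (X * CR)) = 0 := by
    calc Q11 * (C1ᵀ * (X * CR)) + Q12 * (CRᵀ * (X * CR))
        = C1ᵀ * (A * (C1 * (C1ᵀ * (X * CR)))) + C1ᵀ * (A * (CR * (CRᵀ * (X * CR)))) := by
          rw [← hQ11A, ← hQ12A]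
          simp only [Matrix.mul_assoc]
      _ = C1ᵀ * (A * ((C1 * C1ᵀ + CR * CRᵀ) * (X * CR))) := by
          simp only [Matrix.add_mul, Matrix.mul_add, Matrix.mul_assoc]
      _ = 0 := by rw [hcompl, Matrix.one_mul, h0A, hC1CR]
  have e2 : Q12ᵀ * (C1ᵀ * (X * CR)) + Q22 * (CRᵀ * (X * CR)) = 1 := by
    calc Q12ᵀ * (C1ᵀ * (X * CR)) + Q22 * (CRᵀ * (X * CR))
        = CRᵀ * (A * (C1 * (C1ᵀ * (X * CR)))) + CRᵀ * (A * (CR * (CRᵀ * (X * CR)))) := by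
          rw [← hQ21A, ← hQ22A]
          simp only [Matrix.mul_assoc]
      _ = CRᵀ * (A * ((C1 * C1ᵀ + CR * CRᵀ) * (X * CR))) := by
          simp only [Matrix.add_mul, Matrix.mul_add, Matrix.mul_assoc]
      _ = 1 := by rw [hcompl, Matrix.one_mul, h0A, hCRCR]
  -- Q11 invertible
  have hC1inj : ∀ x : Fin M → ℝ, C1 *ᵥ x = 0 → x = 0 := by
    intro x hx
    calc x = (C1ᵀ * C1) *ᵥ x := by rw [hC1C1, Matrix.one_mulVec]
      _ = C1ᵀ *ᵥ (C1 *ᵥ x) := (Matrix.mulVec_mulVec _ _ _).symm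
      _ = 0 := by rw [hx, Matrix.mulVec_zero]
  have hQ11pd : Q11.PosDef := aux_conj hℋpd C1 hC1inj hℋtr
  have hQ11inv : Q11⁻¹ * Q11 = 1 := Matrix.nonsing_inv_mul _ hQ11pd.det_pos.ne'.isUnit
  have hb : C1ᵀ * (X * CR) = -(Q11⁻¹ * (Q12 * (CRᵀ * (X * CR)))) := by
    have h4 : Q11 * (C1ᵀ * (X * CR)) = -(Q12 * (CRᵀ * (X * CR))) :=
      eq_neg_of_add_eq_zero_left e1
    calc C1ᵀ * (X * CR) = Q11⁻¹ * (Q11 * (C1ᵀ * (X * CR))) := by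
          rw [← Matrix.mul_assoc Q11⁻¹ Q11, hQ11inv, Matrix.one_mul]
      _ = -(Q11⁻¹ * (Q12 * (CRᵀ * (X * CR)))) := by rw [h4, Matrix.mul_neg]
  have hSd : (Q22 - Q12ᵀ * Q11⁻¹ * Q12) * (CRᵀ * (X * CR)) = 1 := by
    calc (Q22 - Q12ᵀ * Q11⁻¹ * Q12) * (CRᵀ * (X * CR))
        = Q22 * (CRᵀ * (X * CR)) - Q12ᵀ * (Q11⁻¹ * (Q12 * (CRᵀ * (X * CR)))) := by
          simp only [Matrix.sub_mul, Matrix.mul_assoc]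
      _ = Q12ᵀ * (C1ᵀ * (X * CR)) + Q22 * (CRᵀ * (X * CR)) := by
          rw [hb, Matrix.mul_neg, neg_add_eq_sub]
      _ = 1 := e2
  have hG : G = CRᵀ * (X * CR) := Matrix.inv_eq_right_inv hSd
  -- difference formula
  have hWη2 : Wη = W - η • (X *ᵥ (ℒ *ᵥ W)) := by
    have hℋA : ℋ *ᵥ W = A *ᵥ W - η • (ℒ *ᵥ W) := by
      rw [hAdef, Matrix.add_mulVec, Matrix.smul_mulVec, add_sub_cancel_right]
    rw [hWηdef, hℋA, Matrix.mulVec_sub, Matrix.mulVec_mulVec, hXA,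
      Matrix.one_mulVec, Matrix.mulVec_smul]
  have hLW : ℒ *ᵥ W = CR *ᵥ (D *ᵥ (CRᵀ *ᵥ W)) := by
    rw [hLfact]
    simp only [Matrix.mulVec_mulVec, Matrix.mul_assoc]
  constructor
  · rw [hWη2, sub_sub_cancel_left, hLW]
    simp only [Matrix.mulVec_neg, Matrix.mulVec_smul, Matrix.mulVec_mulVec]
    have hKone : K - 1 = -(η • (G * D)) := by
      rw [show K = 1 - η • (G * D) from rfl, sub_sub_cancel_left]
    have hE : (K - 1) * CRᵀ = -(η • (CRᵀ * (X * (CR * (D * CRᵀ))))) := by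
      rw [hKone, hG]
      simp only [Matrix.neg_mul, Matrix.smul_mul, Matrix.mul_assoc]
    rw [hE, Matrix.neg_mulVec, Matrix.smul_mulVec]
  · intro h0
    rw [hWη2, hLW, h0, Matrix.mulVec_zero, Matrix.mulVec_zero, Matrix.mulVec_zero,
      smul_zero, sub_zero]
end
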